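/- Let G be a finite simple graph with n vertices and minimum degree δ ≥ 24000. Then the signed domination number of G satisfies γ_s(G) ≤ ((√(6.8 ln(δ+1)) + 0.32) / √(δ+1)) · n. -/

import Mathlib

/-- `f : V → ℤ` is a signed domination function of `G`: it takes values in `{-1, +1}`
and sums to at least `1` over every closed neighbourhood. -/
def SimpleGraph.IsSignedDominationFunction {V : Type*} [Fintype V] [DecidableEq V]
    (G : SimpleGraph V) [DecidableRel G.Adj] (f : V → ℤ) : Prop :=
  (∀ v, f v = 1 ∨ f v = -1) ∧
  ∀ v : V, 1 ≤ ∑ u ∈ insert v (G.neighborFinset v), f u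

/-- The signed domination number `γ_s(G)`. -/
noncomputable def SimpleGraph.signedDominationNumber {V : Type*} [Fintype V] [DecidableEq V]
    (G : SimpleGraph V) [DecidableRel G.Adj] : ℤ :=
  sInf {s : ℤ | ∃ f : V → ℤ, G.IsSignedDominationFunction f ∧ s = ∑ v, f v}

lemma sum_prod_bool {V : Type*} [Fintype V] [DecidableEq V] (g : V → Bool → ℝ) :
    ∑ ω : V → Bool, ∏ v, g v (ω v) = ∏ v, (g v true + g v false) := by
  classical
  have h := Finset.prod_univ_sum (t := fun _ : V => (Finset.univ : Finset Bool))
    (f := fun v b => g v b)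
  rw [Fintype.piFinset_univ] at h
  simp only [Fintype.sum_bool] at h
  rw [← h]


set_option maxHeartbeats 1600000 in
theorem signed_domination_upper_bound_delta_ge_24000
    {V : Type*} [Fintype V] [DecidableEq V] [Nonempty V]
    (G : SimpleGraph V) [DecidableRel G.Adj]
    (δ : ℕ) (hδdef : δ = G.minDegree) (hδ : 24000 ≤ δ) :
    (G.signedDominationNumber : ℝ) ≤
      ((Real.sqrt (6.8 * Real.log ((δ : ℝ) + 1)) + 0.32) / Real.sqrt ((δ : ℝ) + 1)) *
        (Fintype.card V : ℝ) := by
  classical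
  set D : ℝ := (δ : ℝ) + 1 with hDdef
  set L : ℝ := Real.log D with hLdef
  have hD : (24001 : ℝ) ≤ D := by
    have : (24000 : ℝ) ≤ (δ : ℝ) := by exact_mod_cast hδ
    simp only [hDdef]; linarith
  have hDpos : (0 : ℝ) < D := by linarith
  have hL2 : (2 : ℝ) ≤ L := by
    rw [hLdef, Real.le_log_iff_exp_le hDpos]
    have h1 : Real.exp 1 < 2.7182818286 := Real.exp_one_lt_d9
    have : Real.exp 2 = Real.exp 1 * Real.exp 1 := by
      rw [← Real.exp_add]; norm_num
    nlinarith [Real.exp_pos 1]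
  have hLpos : (0 : ℝ) < L := by linarith
  set ε : ℝ := Real.sqrt (1.7 * L / D) with hεdef
  have hεnonneg : 0 ≤ ε := Real.sqrt_nonneg _
  have hεsq : ε ^ 2 = 1.7 * L / D := by
    rw [hεdef, Real.sq_sqrt]; positivity
  have hεpos : 0 < ε := by
    rw [hεdef]; apply Real.sqrt_pos.mpr; positivity
  have hεhalf : ε < 1 / 2 := by
    have hsqD : Real.sqrt D * Real.sqrt D = D := Real.mul_self_sqrt hDpos.le
    have hsqD154 : (154 : ℝ) ≤ Real.sqrt D := by
      rw [show (154:ℝ) = Real.sqrt (154^2) by rw [Real.sqrt_sq]; norm_num]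
      apply Real.sqrt_le_sqrt; nlinarith
    have hlogle : L ≤ 2 * Real.sqrt D - 2 := by
      have h1 : Real.log (Real.sqrt D) ≤ Real.sqrt D - 1 :=
        Real.log_le_sub_one_of_pos (by positivity)
      have h2 : L = 2 * Real.log (Real.sqrt D) := by
        rw [Real.log_sqrt hDpos.le]; ring
      linarith
    have hε2lt : ε ^ 2 < 1 / 4 := by
      rw [hεsq, div_lt_iff₀ hDpos]
      nlinarith
    nlinarith
  set p : ℝ := 1 / 2 - ε with hpdef
  set q : ℝ := 1 / 2 + ε with hqdef
  have hppos : 0 < p := by simp only [hpdef]; linarith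
  have hqpos : 0 < q := by simp only [hqdef]; linarith
  have hpq : p + q = 1 := by simp only [hpdef, hqdef]; ring
  have hple : p ≤ q := by simp only [hpdef, hqdef]; linarith
  set w : (V → Bool) → ℝ := fun ω => ∏ v, (if ω v then p else q) with hwdef
  have hwpos : ∀ ω, 0 < w ω := by
    intro ω; apply Finset.prod_pos; intro v _; split <;> assumption
  have hwsum : ∑ ω : V → Bool, w ω = 1 := by
    have := sum_prod_bool (fun (v : V) (b : Bool) => if b then p else q)
    simp only [if_true, if_false] at this
    rw [hwdef, this]
    simp [hpq]
  set Nv : V → Finset V := fun v => insert v (G.neighborFinset v) with hNvdef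
  set m : V → ℕ := fun v => (Nv v).card with hmdef
  have hmself : ∀ v, v ∈ Nv v := fun v => Finset.mem_insert_self _ _
  have hmge : ∀ v, (δ : ℝ) + 1 ≤ (m v : ℝ) := by
    intro v
    have h1 : m v = G.degree v + 1 := by
      simp only [hmdef, hNvdef]
      rw [Finset.card_insert_of_notMem (SimpleGraph.notMem_neighborFinset_self G v)]
      rfl
    have h2 : δ ≤ G.degree v := hδdef ▸ G.minDegree_le_degree v
    rw [h1]; push_cast; exact_mod_cast by exact_mod_cast Nat.add_le_add_right h2 1
  set X : V → (V → Bool) → ℕ := fun v ω => ((Nv v).filter (fun u => ω u = true)).card with hXdef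
  have hXle : ∀ v ω, X v ω ≤ m v := fun v ω => Finset.card_filter_le _ _
  set Bad : V → (V → Bool) → Prop := fun v ω => m v ≤ 2 * X v ω with hBaddef
  -- expectation of a single sign
  have hmean : ∀ v : V, ∑ ω : V → Bool, w ω * (if ω v then (-1 : ℝ) else 1) = 2 * ε := by
    intro v0
    have key : ∀ ω : V → Bool, w ω * (if ω v0 then (-1:ℝ) else 1) =
        ∏ u, ((if ω u then p else q) * (if u = v0 then (if ω u then (-1:ℝ) else 1) else 1)) := by
      intro ω
      rw [Finset.prod_mul_distrib, Finset.prod_ite_eq' Finset.univ v0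
        (fun u => if ω u then (-1:ℝ) else 1), if_pos (Finset.mem_univ v0)]
    have hg := sum_prod_bool (fun (u : V) (b : Bool) =>
      (if b then p else q) * (if u = v0 then (if b then (-1:ℝ) else 1) else 1))
    rw [Finset.sum_congr rfl (fun ω _ => key ω), hg]
    have hfac : ∀ u : V,
        (if (true:Bool) then p else q) * (if u = v0 then (if (true:Bool) then (-1:ℝ) else 1) else 1)
          + (if (false:Bool) then p else q) * (if u = v0 then (if (false:Bool) then (-1:ℝ) else 1) else 1)
        = (if u = v0 then q - p else 1) := by
      intro u; by_cases h : u = v0 <;> simp [h, hpq] <;> ring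
    rw [Finset.prod_congr rfl (fun u _ => hfac u),
      Finset.prod_ite_eq' Finset.univ v0 (fun _ => q - p), if_pos (Finset.mem_univ v0)]
    simp only [hpdef, hqdef]; ring
  -- mgf computation
  have hmgf : ∀ v : V, ∑ ω : V → Bool, w ω * (q / p) ^ (X v ω) = (2 * q) ^ (m v) := by
    intro v0
    have hr : p * (q / p) = q := by field_simp
    have key : ∀ ω : V → Bool, w ω * (q / p) ^ (X v0 ω) =
        ∏ u, ((if ω u then p else q) * (if u ∈ Nv v0 then (if ω u then q / p else 1) else 1)) := by
      intro ω
      rw [Finset.prod_mul_distrib]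
      congr 1
      rw [Finset.prod_ite_mem Finset.univ (Nv v0) (fun u => if ω u then q / p else 1),
        Finset.univ_inter, Finset.prod_ite, Finset.prod_const, Finset.prod_const, one_pow, mul_one]
    have hg := sum_prod_bool (fun (u : V) (b : Bool) =>
      (if b then p else q) * (if u ∈ Nv v0 then (if b then q / p else 1) else 1))
    rw [Finset.sum_congr rfl (fun ω _ => key ω), hg]
    have hfac : ∀ u : V,
        (if (true:Bool) then p else q) * (if u ∈ Nv v0 then (if (true:Bool) then q / p else 1) else 1)
          + (if (false:Bool) then p else q) * (if u ∈ Nv v0 then (if (false:Bool) then q / p else 1) else 1)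
        = (if u ∈ Nv v0 then 2 * q else 1) := by
      intro u; by_cases h : u ∈ Nv v0 <;> simp [h, hr] <;> linarith [hr, hpq]
    rw [Finset.prod_congr rfl (fun u _ => hfac u),
      Finset.prod_ite_mem Finset.univ (Nv v0) (fun _ => 2 * q), Finset.univ_inter,
      Finset.prod_const]
  -- Chernoff
  have hcher : ∀ v : V,
      ∑ ω ∈ Finset.univ.filter (fun ω => Bad v ω), w ω ≤ Real.exp (-(2 * ε ^ 2 * (m v : ℝ))) := by
    intro v0
    have hrge1 : 1 ≤ q / p := (one_le_div hppos).mpr hple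
    have step1 : (∑ ω ∈ Finset.univ.filter (fun ω => Bad v0 ω), w ω) *
        Real.sqrt ((q / p) ^ (m v0)) ≤ (2 * q) ^ (m v0) := by
      rw [Finset.sum_mul]
      calc ∑ ω ∈ Finset.univ.filter (fun ω => Bad v0 ω), w ω * Real.sqrt ((q / p) ^ (m v0))
          ≤ ∑ ω ∈ Finset.univ.filter (fun ω => Bad v0 ω), w ω * (q / p) ^ (X v0 ω) := by
            apply Finset.sum_le_sum
            intro ω hω
            have h2X : m v0 ≤ 2 * X v0 ω := (Finset.mem_filter.mp hω).2
            have hpow : (q / p) ^ (m v0) ≤ ((q / p) ^ (X v0 ω)) ^ 2 := by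
              rw [← pow_mul]
              exact pow_le_pow_right₀ hrge1 (by omega)
            have : Real.sqrt ((q / p) ^ (m v0)) ≤ (q / p) ^ (X v0 ω) := by
              calc Real.sqrt ((q / p) ^ (m v0)) ≤ Real.sqrt (((q / p) ^ (X v0 ω)) ^ 2) :=
                    Real.sqrt_le_sqrt hpow
                _ = (q / p) ^ (X v0 ω) := Real.sqrt_sq (by positivity)
            exact mul_le_mul_of_nonneg_left this (hwpos ω).le
        _ ≤ ∑ ω : V → Bool, w ω * (q / p) ^ (X v0 ω) := by
            apply Finset.sum_le_sum_of_subset_of_nonneg (Finset.filter_subset _ _)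
            intro ω _ _
            exact mul_nonneg (hwpos ω).le (by positivity)
        _ = (2 * q) ^ (m v0) := hmgf v0
    have step2 : Real.sqrt ((4 * p * q) ^ (m v0)) * Real.sqrt ((q / p) ^ (m v0))
        = (2 * q) ^ (m v0) := by
      rw [← Real.sqrt_mul (by positivity), ← mul_pow]
      have h1 : 4 * p * q * (q / p) = (2 * q) ^ 2 := by field_simp; ring
      rw [h1, ← pow_mul, mul_comm 2 (m v0), pow_mul]
      exact Real.sqrt_sq (by positivity)
    have step3 : ∑ ω ∈ Finset.univ.filter (fun ω => Bad v0 ω), w ω ≤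
        Real.sqrt ((4 * p * q) ^ (m v0)) := by
      have hS : 0 < Real.sqrt ((q / p) ^ (m v0)) := Real.sqrt_pos.mpr (by positivity)
      have := step2 ▸ step1
      exact le_of_mul_le_mul_right this hS
    refine step3.trans ?_
    have h4pq : 4 * p * q = 1 - 4 * ε ^ 2 := by simp only [hpdef, hqdef]; ring
    have hnn : 0 ≤ 1 - 4 * ε ^ 2 := by nlinarith
    have hle : 1 - 4 * ε ^ 2 ≤ Real.exp (-(4 * ε ^ 2)) := by
      have := Real.add_one_le_exp (-(4 * ε ^ 2)); linarith
    have hpow : (4 * p * q) ^ (m v0) ≤ Real.exp (-(4 * ε ^ 2 * (m v0 : ℝ))) := by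
      rw [h4pq]
      calc (1 - 4 * ε ^ 2) ^ (m v0) ≤ (Real.exp (-(4 * ε ^ 2))) ^ (m v0) :=
            pow_le_pow_left₀ hnn hle (m v0)
        _ = Real.exp (-(4 * ε ^ 2 * (m v0 : ℝ))) := by
            rw [← Real.exp_nat_mul]; ring_nf
    calc Real.sqrt ((4 * p * q) ^ (m v0)) ≤ Real.sqrt (Real.exp (-(4 * ε ^ 2 * (m v0 : ℝ)))) :=
          Real.sqrt_le_sqrt hpow
      _ = Real.exp (-(2 * ε ^ 2 * (m v0 : ℝ))) := by
          rw [show -(4 * ε ^ 2 * (m v0 : ℝ)) = (-(2 * ε ^ 2 * (m v0 : ℝ))) + (-(2 * ε ^ 2 * (m v0 : ℝ))) by ring,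
            Real.exp_add]
          exact Real.sqrt_mul_self (Real.exp_pos _).le
  -- per-vertex analytic bound
  have hvert : ∀ v : V,
      2 * (m v : ℝ) * Real.exp (-(2 * ε ^ 2 * (m v : ℝ))) ≤ 0.32 / Real.sqrt D := by
    intro v0
    set M : ℝ := (m v0 : ℝ) with hMdef
    have hMD : D ≤ M := hmge v0
    have hM0 : 0 < M := lt_of_lt_of_le hDpos hMD
    have hc : (0 : ℝ) < ε ^ 2 := by positivity
    have hE : (2.7182818283 : ℝ) < Real.exp 1 := Real.exp_one_gt_d9
    have hEpos : (0:ℝ) < Real.exp 1 := Real.exp_pos 1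
    -- step A : M * exp (-(ε^2*M)) ≤ 1/(ε^2 * exp 1)
    have hA : M * Real.exp (-(ε ^ 2 * M)) ≤ 1 / (ε ^ 2 * Real.exp 1) := by
      have h1 : ε ^ 2 * M ≤ Real.exp (ε ^ 2 * M - 1) := by
        have := Real.add_one_le_exp (ε ^ 2 * M - 1); linarith
      have h2 : ε ^ 2 * M * Real.exp (-(ε ^ 2 * M)) ≤
          Real.exp (ε ^ 2 * M - 1) * Real.exp (-(ε ^ 2 * M)) :=
        mul_le_mul_of_nonneg_right h1 (Real.exp_pos _).le
      rw [← Real.exp_add] at h2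
      have h3 : ε ^ 2 * M - 1 + -(ε ^ 2 * M) = -1 := by ring
      rw [h3, Real.exp_neg 1] at h2
      rw [le_div_iff₀ (by positivity)]
      calc M * Real.exp (-(ε ^ 2 * M)) * (ε ^ 2 * Real.exp 1)
          = (ε ^ 2 * M * Real.exp (-(ε ^ 2 * M))) * Real.exp 1 := by ring
        _ ≤ (Real.exp 1)⁻¹ * Real.exp 1 := mul_le_mul_of_nonneg_right h2 hEpos.le
        _ = 1 := inv_mul_cancel₀ (ne_of_gt hEpos)
    have hB : Real.exp (-(ε ^ 2 * M)) ≤ Real.exp (-(ε ^ 2 * D)) := by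
      apply Real.exp_le_exp.mpr
      have : ε ^ 2 * D ≤ ε ^ 2 * M := mul_le_mul_of_nonneg_left hMD hc.le
      linarith
    have hsplit : Real.exp (-(2 * ε ^ 2 * M)) =
        Real.exp (-(ε ^ 2 * M)) * Real.exp (-(ε ^ 2 * M)) := by
      rw [← Real.exp_add]; ring_nf
    have hC : 2 * M * Real.exp (-(2 * ε ^ 2 * M)) ≤
        2 * (1 / (ε ^ 2 * Real.exp 1)) * Real.exp (-(ε ^ 2 * D)) := by
      rw [hsplit]
      have e1 : (0:ℝ) ≤ Real.exp (-(ε ^ 2 * M)) := (Real.exp_pos _).le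
      have e2 : (0:ℝ) ≤ 1 / (ε ^ 2 * Real.exp 1) := by positivity
      calc 2 * M * (Real.exp (-(ε ^ 2 * M)) * Real.exp (-(ε ^ 2 * M)))
          = 2 * ((M * Real.exp (-(ε ^ 2 * M))) * Real.exp (-(ε ^ 2 * M))) := by ring
        _ ≤ 2 * ((1 / (ε ^ 2 * Real.exp 1)) * Real.exp (-(ε ^ 2 * D))) := by
            apply mul_le_mul_of_nonneg_left _ (by norm_num : (0:ℝ) ≤ 2)
            exact mul_le_mul hA hB e1 e2
        _ = 2 * (1 / (ε ^ 2 * Real.exp 1)) * Real.exp (-(ε ^ 2 * D)) := by ring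
    refine hC.trans ?_
    -- now pure analysis in terms of L
    have hεD : ε ^ 2 * D = 1.7 * L := by
      rw [hεsq]; field_simp
    have hexpL : Real.exp L = D := Real.exp_log hDpos
    have hsqrtD : Real.sqrt D = Real.exp (L / 2) := by
      have hDer : Real.exp (L / 2) * Real.exp (L / 2) = D := by
        rw [← Real.exp_add, show L / 2 + L / 2 = L by ring, hexpL]
      rw [← hDer]
      exact Real.sqrt_mul_self (Real.exp_pos _).le
    have k1 : 2 / (1.7 * L * Real.exp 1) ≤ 0.32 := by
      rw [div_le_iff₀ (by positivity)]
      nlinarith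
    have k2 : Real.exp (-(0.7 * L)) ≤ Real.exp (-(L / 2)) := by
      apply Real.exp_le_exp.mpr; linarith
    calc 2 * (1 / (ε ^ 2 * Real.exp 1)) * Real.exp (-(ε ^ 2 * D))
        = 2 / (1.7 * L * Real.exp 1) * (Real.exp L * Real.exp (-(1.7 * L))) := by
          have hinv : 1 / (ε ^ 2 * Real.exp 1) = D / (1.7 * L * Real.exp 1) := by
            rw [hεsq]; field_simp
          rw [hinv, hεD, ← hexpL]; ring
      _ = 2 / (1.7 * L * Real.exp 1) * Real.exp (-(0.7 * L)) := by
          rw [← Real.exp_add, show L + -(1.7 * L) = -(0.7 * L) by ring]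
      _ ≤ 0.32 * Real.exp (-(L / 2)) :=
          mul_le_mul k1 k2 (Real.exp_pos _).le (by norm_num)
      _ = 0.32 / Real.sqrt D := by
          rw [hsqrtD, Real.exp_neg]; ring
  -- expectation of T
  set T : (V → Bool) → ℝ := fun ω =>
    (∑ v, (if ω v then (-1 : ℝ) else 1)) +
      ∑ v, (if Bad v ω then 2 * (X v ω : ℝ) else 0) with hTdef
  have hET : ∑ ω : V → Bool, w ω * T ω ≤
      (Fintype.card V : ℝ) * (2 * ε + 0.32 / Real.sqrt D) := by
    have hsplitT : ∑ ω : V → Bool, w ω * T ω =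
        (∑ v : V, ∑ ω : V → Bool, w ω * (if ω v then (-1 : ℝ) else 1)) +
        ∑ v : V, ∑ ω : V → Bool, w ω * (if Bad v ω then 2 * (X v ω : ℝ) else 0) := by
      rw [hTdef]
      simp only [mul_add, Finset.sum_add_distrib, Finset.mul_sum]
      rw [Finset.sum_comm (s := (Finset.univ : Finset (V → Bool)))
        (t := (Finset.univ : Finset V)),
        Finset.sum_comm (s := (Finset.univ : Finset (V → Bool)))
        (t := (Finset.univ : Finset V))]
    rw [hsplitT]
    have hterm1 : ∑ v : V, ∑ ω : V → Bool, w ω * (if ω v then (-1 : ℝ) else 1)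
        = (Fintype.card V : ℝ) * (2 * ε) := by
      rw [Finset.sum_congr rfl (fun v _ => hmean v), Finset.sum_const, Finset.card_univ,
        nsmul_eq_mul]
    have hterm2 : ∑ v : V, ∑ ω : V → Bool, w ω * (if Bad v ω then 2 * (X v ω : ℝ) else 0)
        ≤ (Fintype.card V : ℝ) * (0.32 / Real.sqrt D) := by
      calc ∑ v : V, ∑ ω : V → Bool, w ω * (if Bad v ω then 2 * (X v ω : ℝ) else 0)
          ≤ ∑ v : V, (0.32 / Real.sqrt D) := by
            apply Finset.sum_le_sum
            intro v _
            have hv1 : ∑ ω : V → Bool, w ω * (if Bad v ω then 2 * (X v ω : ℝ) else 0)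
                ≤ 2 * (m v : ℝ) * ∑ ω ∈ Finset.univ.filter (fun ω => Bad v ω), w ω := by
              rw [Finset.mul_sum]
              have hpt2 : ∀ ω : V → Bool, w ω * (if Bad v ω then 2 * (X v ω : ℝ) else 0)
                  = if Bad v ω then w ω * (2 * (X v ω : ℝ)) else 0 := fun ω => by
                rw [mul_ite, mul_zero]
              rw [Finset.sum_congr rfl (fun ω _ => hpt2 ω), ← Finset.sum_filter]
              apply Finset.sum_le_sum
              intro ω hω
              rw [mul_comm (2 * (m v : ℝ)) (w ω)]
              apply mul_le_mul_of_nonneg_left _ (hwpos ω).le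
              have := hXle v ω
              have : (X v ω : ℝ) ≤ (m v : ℝ) := by exact_mod_cast this
              linarith
            refine hv1.trans ?_
            calc 2 * (m v : ℝ) * ∑ ω ∈ Finset.univ.filter (fun ω => Bad v ω), w ω
                ≤ 2 * (m v : ℝ) * Real.exp (-(2 * ε ^ 2 * (m v : ℝ))) := by
                  exact mul_le_mul_of_nonneg_left (hcher v)
                    (mul_nonneg (by norm_num) (Nat.cast_nonneg _))
              _ ≤ 0.32 / Real.sqrt D := hvert v
        _ = (Fintype.card V : ℝ) * (0.32 / Real.sqrt D) := by
            rw [Finset.sum_const, Finset.card_univ, nsmul_eq_mul]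
    rw [hterm1, mul_add]
    linarith
  -- pick a good outcome
  obtain ⟨ω₀, -, hω₀⟩ := Finset.exists_min_image Finset.univ T ⟨Classical.arbitrary _, Finset.mem_univ _⟩
  have hTω₀ : T ω₀ ≤ (Fintype.card V : ℝ) * (2 * ε + 0.32 / Real.sqrt D) := by
    refine le_trans ?_ hET
    calc T ω₀ = ∑ ω : V → Bool, w ω * T ω₀ := by
          rw [← Finset.sum_mul, hwsum, one_mul]
      _ ≤ ∑ ω : V → Bool, w ω * T ω := by
          apply Finset.sum_le_sum; intro ω _
          exact mul_le_mul_of_nonneg_left (hω₀ ω (Finset.mem_univ _)) (hwpos ω).le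
  -- construct the signed domination function
  set f' : V → ℤ := fun u =>
    if (ω₀ u = false) ∨ ∃ v, Bad v ω₀ ∧ u ∈ Nv v then 1 else -1 with hf'def
  have hSDF : G.IsSignedDominationFunction f' := by
    constructor
    · intro u
      simp only [hf'def]
      split
      · exact Or.inl rfl
      · exact Or.inr rfl
    · intro z
      show 1 ≤ ∑ u ∈ Nv z, f' u
      by_cases hbz : Bad z ω₀
      · have hall : ∀ u ∈ Nv z, f' u = 1 := by
          intro u hu
          simp only [hf'def]
          exact if_pos (Or.inr ⟨z, hbz, hu⟩)
        rw [Finset.sum_congr rfl hall, Finset.sum_const, nsmul_eq_mul, mul_one]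
        have : 0 < (Nv z).card := Finset.card_pos.mpr ⟨z, hmself z⟩
        exact_mod_cast this
      · have hlow : ∑ u ∈ Nv z, (if ω₀ u then (-1 : ℤ) else 1) ≤ ∑ u ∈ Nv z, f' u := by
          apply Finset.sum_le_sum
          intro u _
          by_cases h1 : ω₀ u = true
          · simp only [h1, if_true]
            simp only [hf'def]
            split
            · omega
            · omega
          · have h1' : ω₀ u = false := by simp at h1; exact h1
            simp only [h1', if_false, Bool.false_eq_true]
            simp only [hf'def]
            rw [if_pos (Or.inl h1')]
        have hid : ∑ u ∈ Nv z, (if ω₀ u then (-1 : ℤ) else 1)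
            = (m z : ℤ) - 2 * (X z ω₀ : ℤ) := by
          rw [Finset.sum_ite, Finset.sum_const, Finset.sum_const]
          have hcards := Finset.card_filter_add_card_filter_not
            (s := Nv z) (p := fun u => ω₀ u = true)
          simp only [nsmul_eq_mul, mul_one, mul_neg_one]
          have hX : ((Nv z).filter (fun u => ω₀ u = true)).card = X z ω₀ := rfl
          have hm : (Nv z).card = m z := rfl
          omega
        have hnb : 2 * X z ω₀ < m z := by
          simp only [hBaddef] at hbz
          omega
        omega
  have hf'sum : ((∑ v, f' v : ℤ) : ℝ) ≤ T ω₀ := by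
    have hpt : ∀ u : V, f' u = (if ω₀ u then (-1 : ℤ) else 1) +
        (if (ω₀ u = true ∧ ∃ v, Bad v ω₀ ∧ u ∈ Nv v) then 2 else 0) := by
      intro u
      by_cases h1 : ω₀ u = true
      · by_cases h2 : ∃ v, Bad v ω₀ ∧ u ∈ Nv v
        · simp only [hf'def, h1, h2, and_true, true_and, if_true, or_true, Bool.true_eq_false]
          norm_num
        · simp only [hf'def, h1, h2, and_false, if_false, or_false, Bool.true_eq_false]
          norm_num
      · have h1' : ω₀ u = false := by simp at h1; exact h1
        simp [hf'def, h1']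
    have hZ : ∑ v, f' v ≤ (∑ v, (if ω₀ v then (-1 : ℤ) else 1)) +
        ∑ v, (if Bad v ω₀ then 2 * (X v ω₀ : ℤ) else 0) := by
      rw [Finset.sum_congr rfl (fun u _ => hpt u), Finset.sum_add_distrib]
      apply add_le_add le_rfl
      set S : Finset V := Finset.univ.filter
        (fun u => ω₀ u = true ∧ ∃ v, Bad v ω₀ ∧ u ∈ Nv v) with hSdef
      have hLHS : ∑ u : V, (if (ω₀ u = true ∧ ∃ v, Bad v ω₀ ∧ u ∈ Nv v) then (2:ℤ) else 0)
          = 2 * (S.card : ℤ) := by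
        rw [← Finset.sum_filter, ← hSdef, Finset.sum_const, nsmul_eq_mul]
        ring
      have hRHS : ∑ v, (if Bad v ω₀ then 2 * (X v ω₀ : ℤ) else 0)
          = ∑ v ∈ Finset.univ.filter (fun v => Bad v ω₀), 2 * (X v ω₀ : ℤ) := by
        rw [← Finset.sum_filter]
      have hcard : S.card ≤ ∑ v ∈ Finset.univ.filter (fun v => Bad v ω₀), X v ω₀ := by
        have hsub : S ⊆ (Finset.univ.filter (fun v => Bad v ω₀)).biUnion
            (fun v => (Nv v).filter (fun u => ω₀ u = true)) := by
          intro u hu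
          rw [hSdef, Finset.mem_filter] at hu
          obtain ⟨-, h1, v, hbv, huv⟩ := hu
          exact Finset.mem_biUnion.mpr ⟨v, Finset.mem_filter.mpr ⟨Finset.mem_univ _, hbv⟩,
            Finset.mem_filter.mpr ⟨huv, h1⟩⟩
        calc S.card ≤ ((Finset.univ.filter (fun v => Bad v ω₀)).biUnion
            (fun v => (Nv v).filter (fun u => ω₀ u = true))).card := Finset.card_le_card hsub
          _ ≤ ∑ v ∈ Finset.univ.filter (fun v => Bad v ω₀),
              ((Nv v).filter (fun u => ω₀ u = true)).card := Finset.card_biUnion_le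
          _ = ∑ v ∈ Finset.univ.filter (fun v => Bad v ω₀), X v ω₀ := rfl
      rw [hLHS, hRHS]
      have h2 : (S.card : ℤ) ≤
          ((∑ v ∈ Finset.univ.filter (fun v => Bad v ω₀), X v ω₀ : ℕ) : ℤ) := by
        exact_mod_cast hcard
      calc 2 * (S.card : ℤ)
          ≤ 2 * ((∑ v ∈ Finset.univ.filter (fun v => Bad v ω₀), X v ω₀ : ℕ) : ℤ) := by linarith
        _ = ∑ v ∈ Finset.univ.filter (fun v => Bad v ω₀), 2 * (X v ω₀ : ℤ) := by
            push_cast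
            rw [Finset.mul_sum]
    calc ((∑ v, f' v : ℤ) : ℝ) ≤ (((∑ v, (if ω₀ v then (-1 : ℤ) else 1)) +
        ∑ v, (if Bad v ω₀ then 2 * (X v ω₀ : ℤ) else 0) : ℤ) : ℝ) := by exact_mod_cast hZ
      _ = T ω₀ := by
          rw [hTdef]
          push_cast [apply_ite (fun z : ℤ => (z : ℝ))]
          norm_num
  -- conclude
  have hbdd : BddBelow {s : ℤ | ∃ f : V → ℤ, G.IsSignedDominationFunction f ∧ s = ∑ v, f v} := by
    refine ⟨-(Fintype.card V : ℤ), ?_⟩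
    rintro s ⟨f, hf, rfl⟩
    calc -(Fintype.card V : ℤ) = ∑ _v : V, (-1 : ℤ) := by
          simp [Finset.card_univ]
      _ ≤ ∑ v, f v := Finset.sum_le_sum (fun v _ => by rcases hf.1 v with h | h <;> omega)
  have hmem : (∑ v, f' v) ∈
      {s : ℤ | ∃ f : V → ℤ, G.IsSignedDominationFunction f ∧ s = ∑ v, f v} :=
    ⟨f', hSDF, rfl⟩
  have hγ : G.signedDominationNumber ≤ ∑ v, f' v := csInf_le hbdd hmem
  have hrhs : (Fintype.card V : ℝ) * (2 * ε + 0.32 / Real.sqrt D) =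
      ((Real.sqrt (6.8 * L) + 0.32) / Real.sqrt D) * (Fintype.card V : ℝ) := by
    have h4 : Real.sqrt 4 = 2 := by
      rw [show (4:ℝ) = 2 ^ 2 by norm_num, Real.sqrt_sq (by norm_num : (0:ℝ) ≤ 2)]
    have h2ε : 2 * ε = Real.sqrt (6.8 * L) / Real.sqrt D := by
      rw [hεdef, ← Real.sqrt_div (by positivity : (0:ℝ) ≤ 6.8 * L) D,
        show (6.8 : ℝ) * L / D = 4 * (1.7 * L / D) by ring,
        Real.sqrt_mul (by norm_num : (0:ℝ) ≤ 4), h4]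
    rw [add_div, ← h2ε]; ring
  calc (G.signedDominationNumber : ℝ) ≤ (∑ v, f' v : ℤ) := by exact_mod_cast hγ
    _ ≤ T ω₀ := hf'sum
    _ ≤ (Fintype.card V : ℝ) * (2 * ε + 0.32 / Real.sqrt D) := hTω₀
    _ = _ := by rw [hrhs]
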